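/- Suppose guesses are 1/c for all examples except a probe example i whose guess row ŷᵢ has ŷᵢⱼ ≠ 1/c for the true class j of i. If the oracle reports the average log-loss over a subset S and the reported loss equals log c, then i ∉ S; conversely if i ∈ S the reported loss differs from log c. -/

import Mathlib

/-- Membership test: with uniform guesses except at a probe example `i` whose
guess on its true class differs from `1/c`, the reported loss equals `log c`
iff `i` is not in the evaluated subset. -/
theorem stmt9 (c : ℕ) (S : Finset ℕ) (hS : S.Nonempty) (i : ℕ)
    (y : ℕ → Fin c) (Yh : ℕ → Fin c → ℝ)
    (hpos : 0 < Yh i (y i)) (hne : Yh i (y i) ≠ 1 / (c : ℝ))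
    (huniform : ∀ k, k ≠ i → ∀ j, Yh k j = 1 / (c : ℝ))
    (ℓ : ℝ) (hℓ : ℓ = -(1 / (S.card : ℝ)) * ∑ k ∈ S, Real.log (Yh k (y k))) :
    ℓ = Real.log c ↔ i ∉ S := by
  have hc : 0 < c := (y i).pos
  have hcR : (0:ℝ) < c := by exact_mod_cast hc
  have hn : (0:ℝ) < (S.card : ℝ) := by
    exact_mod_cast Finset.card_pos.mpr hS
  have hlog1c : Real.log (1 / (c:ℝ)) = -Real.log c := by
    rw [one_div, Real.log_inv]
  constructor
  · intro hℓc hiS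
    -- sum splits into i's term and uniform terms
    have hsum : ∑ k ∈ S, Real.log (Yh k (y k))
        = Real.log (Yh i (y i)) + ∑ k ∈ S.erase i, Real.log (Yh k (y k)) :=
      (Finset.add_sum_erase S _ hiS).symm
    have herase : ∑ k ∈ S.erase i, Real.log (Yh k (y k))
        = ((S.card : ℝ) - 1) * (-Real.log c) := by
      rw [Finset.sum_congr rfl (fun k hk => by
        rw [huniform k (Finset.ne_of_mem_erase hk), hlog1c])]
      rw [Finset.sum_const, Finset.card_erase_of_mem hiS, nsmul_eq_mul]
      have : ((S.card - 1 : ℕ) : ℝ) = (S.card : ℝ) - 1 := by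
        have := Finset.card_pos.mpr hS
        push_cast [Nat.cast_sub (by omega : 1 ≤ S.card)]
        ring
      rw [this]
    have := hℓ
    rw [hsum, herase, hℓc] at this
    have hL : Real.log (Yh i (y i)) = -Real.log c := by
      have h3 : (S.card:ℝ) * (1 / (S.card:ℝ)) = 1 := mul_one_div_cancel hn.ne'
      linear_combination (S.card:ℝ) * this - (Real.log (Yh i (y i)) - ((S.card:ℝ) - 1) * Real.log c) * h3
    apply hne
    have : Yh i (y i) = Real.exp (Real.log (Yh i (y i))) := (Real.exp_log hpos).symm
    rw [this, hL, ← hlog1c, Real.exp_log (by positivity)]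
  · intro hiS
    have hsum : ∑ k ∈ S, Real.log (Yh k (y k)) = (S.card : ℝ) * (-Real.log c) := by
      rw [Finset.sum_congr rfl (fun k hk => by
        rw [huniform k (fun h => hiS (h ▸ hk)), hlog1c])]
      rw [Finset.sum_const, nsmul_eq_mul]
    rw [hℓ, hsum]
    field_simp
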